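/- Let U be a unitary on H with 1 + U Fredholm and W a closed finite-codimensional subspace with Ker(1+U) ∩ W = {0}. Write U = [[X,Y],[Z,T]] relative to H = W ⊕ W⊥. Then the operator 1 + X = P_W ∘ (1+U)|_W : W → W is invertible. In particular, if w ∈ W satisfies ⟨(1+U)w, v⟩ = 0 for all v ∈ W, then w = 0. -/

import Mathlib

open scoped InnerProductSpace

noncomputable section

variable (H : Type) [NormedAddCommGroup H] [InnerProductSpace ℂ H] [CompleteSpace H]

/-- A bounded operator `T` on `H` is Fredholm: finite-dimensional kernel,
finite-dimensional cokernel, and closed range. -/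
def IsFredholmOp (T : H →L[ℂ] H) : Prop :=
  FiniteDimensional ℂ ↥(LinearMap.ker (T : H →ₗ[ℂ] H)) ∧
  FiniteDimensional ℂ (H ⧸ LinearMap.range (T : H →ₗ[ℂ] H)) ∧
  IsClosed ((LinearMap.range (T : H →ₗ[ℂ] H) : Submodule ℂ H) : Set H)

/-- A unitary mapping a vector `x` so that `⟪Vx, x⟫ = -‖x‖²` must send `x` to `-x`
(equality case in Cauchy–Schwarz). -/
lemma unitary_apply_eq_neg (V : H →L[ℂ] H) (hV : V ∈ unitary (H →L[ℂ] H)) (x : H)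
    (hx : ⟪V x, x⟫_ℂ = -⟪x, x⟫_ℂ) : V x = -x := by
  have hadj : (ContinuousLinearMap.adjoint V).comp V = 1 := by
    rw [← ContinuousLinearMap.star_eq_adjoint]
    simpa [ContinuousLinearMap.mul_def] using hV.1
  have hVV : ⟪V x, V x⟫_ℂ = ⟪x, x⟫_ℂ := by
    rw [← ContinuousLinearMap.adjoint_inner_left]
    have h : (ContinuousLinearMap.adjoint V) (V x) = x := by
      have := congrFun (congrArg DFunLike.coe hadj) x
      simpa using this
    rw [h]
  have hnorm : ‖V x‖ = ‖x‖ := by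
    have h2 : ‖V x‖ ^ 2 = ‖x‖ ^ 2 := by
      rw [← inner_self_eq_norm_sq (𝕜 := ℂ), ← inner_self_eq_norm_sq (𝕜 := ℂ), hVV]
    nlinarith [norm_nonneg (V x), norm_nonneg x]
  have hre : RCLike.re ⟪V x, x⟫_ℂ = -(‖x‖ ^ 2) := by
    rw [hx, map_neg, inner_self_eq_norm_sq]
  have hzero : ‖V x + x‖ ^ 2 = 0 := by
    rw [@norm_add_sq ℂ _ _ _ _ (V x) x, hnorm, hre]; ring
  have h0 : V x + x = 0 :=
    norm_eq_zero.mp (pow_eq_zero_iff (n := 2) (by norm_num) |>.mp hzero)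
  exact eq_neg_of_add_eq_zero_left h0

/-- The sum of a closed subspace and a finite-dimensional subspace of a Hilbert space
is closed. -/
lemma isClosed_sup_of_finiteDimensional (C F : Submodule ℂ H) (hC : IsClosed (C : Set H))
    [FiniteDimensional ℂ ↥F] : IsClosed ((C ⊔ F : Submodule ℂ H) : Set H) := by
  haveI : CompleteSpace C := hC.completeSpace_coe
  set P : H →L[ℂ] ↥(Cᗮ) := Submodule.orthogonalProjectionOnto Cᗮ with hP
  set G : Submodule ℂ H := (C ⊔ F) ⊓ Cᗮ with hGdef
  haveI hG : FiniteDimensional ℂ ↥G := by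
    have hle : G ≤ Submodule.map (Cᗮ.subtype.comp (P : H →ₗ[ℂ] ↥(Cᗮ))) F := by
      rintro x ⟨hx1, hx2⟩
      rcases Submodule.mem_sup.mp hx1 with ⟨c, hc, f, hf, rfl⟩
      refine ⟨f, hf, ?_⟩
      have hPc : P c = 0 := by
        exact Submodule.orthogonalProjectionOnto_eq_zero_iff.mpr (Submodule.le_orthogonal_orthogonal C hc)
      have hPx : ((P (c + f) : H)) = c + f :=
        Submodule.starProjection_eq_self_iff.mpr hx2
      simp only [LinearMap.coe_comp, Function.comp_apply, ContinuousLinearMap.coe_coe,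
        Submodule.coe_subtype]
      have : P f = P (c + f) := by rw [map_add, hPc, zero_add]
      rw [this, hPx]
    exact Submodule.finiteDimensional_of_le hle
  have hGc : IsClosed (G : Set H) := Submodule.closed_of_finiteDimensional G
  have hset : ((C ⊔ F : Submodule ℂ H) : Set H) = (fun x => ((P x : H))) ⁻¹' (G : Set H) := by
    ext x
    constructor
    · intro hx
      refine Set.mem_preimage.mpr ?_
      have h1 : ((P x : H)) ∈ Cᗮ := (P x).2
      have hdec : ((Submodule.orthogonalProjectionOnto C x : H)) + ((P x : H)) = x :=
        Submodule.starProjection_add_starProjection_orthogonal (K := C) x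
      have h2 : ((P x : H)) ∈ C ⊔ F := by
        have hcx : ((Submodule.orthogonalProjectionOnto C x : H)) ∈ C ⊔ F :=
          Submodule.mem_sup_left (Submodule.orthogonalProjectionOnto C x).2
        have heq : ((P x : H)) = x - ((Submodule.orthogonalProjectionOnto C x : H)) :=
          eq_sub_of_add_eq' hdec
        rw [heq]
        exact Submodule.sub_mem _ hx hcx
      exact ⟨h2, h1⟩
    · intro hx
      have h2 : ((P x : H)) ∈ C ⊔ F := (Set.mem_preimage.mp hx).1
      have hdec : ((Submodule.orthogonalProjectionOnto C x : H)) + ((P x : H)) = x :=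
        Submodule.starProjection_add_starProjection_orthogonal (K := C) x
      have : x ∈ C ⊔ F := by
        rw [← hdec]
        exact Submodule.add_mem _ (Submodule.mem_sup_left (Submodule.orthogonalProjectionOnto C x).2) h2
      exact this
  rw [hset]
  exact hGc.preimage (continuous_subtype_val.comp P.continuous)

/-- let `U` be unitary with `1 + U` Fredholm, and `W` a closed
finite-codimensional subspace with `Ker(1+U) ∩ W = 0`. Then the operator
`1 + X = P_W ∘ (1+U)|_W : W → W` is invertible; in particular if `w ∈ W` satisfies
`⟪(1+U)w, v⟫ = 0` for all `v ∈ W`, then `w = 0`. -/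
theorem one_add_block_invertible (U : H →L[ℂ] H) (hU : U ∈ unitary (H →L[ℂ] H))
    (hFred : IsFredholmOp H (1 + U))
    (W : Submodule ℂ H) (hWc : IsClosed (W : Set H)) [W.HasOrthogonalProjection]
    [FiniteDimensional ℂ ↥(Wᗮ)]
    (hclean : LinearMap.ker ((1 + U : H →L[ℂ] H) : H →ₗ[ℂ] H) ⊓ W = ⊥) :
    IsUnit (W.orthogonalProjectionOnto ∘L (1 + U) ∘L W.subtypeL) ∧
    ∀ w : ↥W, (∀ v : ↥W, ⟪(1 + U : H →L[ℂ] H) (w : H), (v : H)⟫_ℂ = 0) → w = 0 := by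
  set T : H →L[ℂ] H := 1 + U with hT
  -- the key injectivity fact
  have key : ∀ w : ↥W, ⟪T (w : H), (w : H)⟫_ℂ = 0 → w = 0 := by
    intro w hw
    have h1 : ⟪U (w : H), (w : H)⟫_ℂ = -⟪(w : H), (w : H)⟫_ℂ := by
      have h0 : ⟪(w : H) + U (w : H), (w : H)⟫_ℂ = 0 := by
        simpa [hT, ContinuousLinearMap.add_apply] using hw
      rw [inner_add_left] at h0
      linear_combination h0
    have h2 : U (w : H) = -(w : H) := unitary_apply_eq_neg H U hU _ h1
    have h3 : (w : H) ∈ LinearMap.ker ((T : H →ₗ[ℂ] H)) := by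
      simp only [LinearMap.mem_ker, ContinuousLinearMap.coe_coe, hT,
        ContinuousLinearMap.add_apply, ContinuousLinearMap.one_apply, h2, add_neg_cancel]
    have h4 : (w : H) ∈ (⊥ : Submodule ℂ H) := by
      rw [← hclean]; exact ⟨h3, w.2⟩
    exact Subtype.ext (by simpa using h4)
  set A : ↥W →L[ℂ] ↥W := Submodule.orthogonalProjectionOnto W ∘L T ∘L W.subtypeL with hA
  have hAinner : ∀ (w v : ↥W), ⟪A w, v⟫_ℂ = ⟪T (w : H), (v : H)⟫_ℂ := by
    intro w v
    simp only [hA, ContinuousLinearMap.comp_apply, Submodule.subtypeL_apply]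
    exact Submodule.inner_orthogonalProjectionOnto_eq_of_mem_right (K := W) v (T ((w : H)))
  constructor
  · -- main invertibility
    set K : Submodule ℂ H := LinearMap.ker ((T : H →ₗ[ℂ] H)) with hK
    haveI hKfd : FiniteDimensional ℂ ↥K := hFred.1
    haveI : CompleteSpace ↥K := FiniteDimensional.complete ℂ ↥K
    set R : Submodule ℂ H := LinearMap.range ((T : H →ₗ[ℂ] H)) with hR
    have hRclosed : IsClosed (R : Set H) := hFred.2.2
    haveI : CompleteSpace ↥R := hRclosed.completeSpace_coe
    haveI : CompleteSpace ↥(Kᗮ) := (Submodule.isClosed_orthogonal K).completeSpace_coe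
    -- the induced bijection Kᗮ → R
    have hmemR : ∀ x : ↥(Kᗮ), T (x : H) ∈ R := fun x => ⟨(x : H), rfl⟩
    set T₂ : ↥(Kᗮ) →L[ℂ] ↥R :=
      (T.comp (Kᗮ).subtypeL).codRestrict R hmemR with hT₂
    have hT₂apply : ∀ x : ↥(Kᗮ), ((T₂ x : H)) = T (x : H) := fun x => rfl
    have hker₂ : LinearMap.ker (T₂ : ↥(Kᗮ) →ₗ[ℂ] ↥R) = ⊥ := by
      rw [LinearMap.ker_eq_bot']
      intro x hx
      have h1 : T (x : H) = 0 := by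
        have := congrArg (Subtype.val) hx
        simpa [hT₂apply] using this
      have h2 : (x : H) ∈ K := h1
      have h3 : (x : H) ∈ K ⊓ Kᗮ := ⟨h2, x.2⟩
      rw [Submodule.inf_orthogonal_eq_bot] at h3
      exact Subtype.ext (by simpa using h3)
    have hrange₂ : LinearMap.range (T₂ : ↥(Kᗮ) →ₗ[ℂ] ↥R) = ⊤ := by
      rw [LinearMap.range_eq_top]
      rintro ⟨y, x, rfl⟩
      refine ⟨Submodule.orthogonalProjectionOnto Kᗮ x, ?_⟩
      apply Subtype.ext
      show T ((Submodule.orthogonalProjectionOnto Kᗮ x : H)) = (T : H →ₗ[ℂ] H) x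
      have hdec : ((Submodule.orthogonalProjectionOnto K x : H)) + ((Submodule.orthogonalProjectionOnto Kᗮ x : H)) = x :=
        Submodule.starProjection_add_starProjection_orthogonal (K := K) x
      have hTk : T ((Submodule.orthogonalProjectionOnto K x : H)) = 0 := (Submodule.orthogonalProjectionOnto K x).2
      calc T ((Submodule.orthogonalProjectionOnto Kᗮ x : H))
          = T ((Submodule.orthogonalProjectionOnto K x : H)) + T ((Submodule.orthogonalProjectionOnto Kᗮ x : H)) := by
            rw [hTk, zero_add]
        _ = T x := by rw [← map_add, hdec]
        _ = (T : H →ₗ[ℂ] H) x := rfl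
    set e : ↥(Kᗮ) ≃L[ℂ] ↥R := ContinuousLinearEquiv.ofBijective T₂ hker₂ hrange₂ with he
    -- T(W) is closed
    set S : Submodule ℂ H := W ⊔ K with hS
    have hSclosed : IsClosed (S : Set H) := isClosed_sup_of_finiteDimensional H W K hWc
    set Ran : Submodule ℂ H := Submodule.map ((T : H →ₗ[ℂ] H)) W with hRan
    have hRanSet : (Ran : Set H) =
        Subtype.val '' (⇑e '' (Subtype.val ⁻¹' (S : Set H))) := by
      ext y
      constructor
      · rintro ⟨w, hw, rfl⟩
        have hdec : ((Submodule.orthogonalProjectionOnto K w : H)) + ((Submodule.orthogonalProjectionOnto Kᗮ w : H)) = w :=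
          Submodule.starProjection_add_starProjection_orthogonal (K := K) w
        refine ⟨e (Submodule.orthogonalProjectionOnto Kᗮ w), ⟨Submodule.orthogonalProjectionOnto Kᗮ w, ?_, rfl⟩, ?_⟩
        · have heq : ((Submodule.orthogonalProjectionOnto Kᗮ w : H)) = w - ((Submodule.orthogonalProjectionOnto K w : H)) :=
            eq_sub_of_add_eq' hdec
          refine Set.mem_preimage.mpr ?_
          rw [heq]
          exact Submodule.sub_mem _ (Submodule.mem_sup_left hw)
            (Submodule.mem_sup_right (Submodule.orthogonalProjectionOnto K w).2)
        · have hTk : T ((Submodule.orthogonalProjectionOnto K w : H)) = 0 := (Submodule.orthogonalProjectionOnto K w).2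
          have : (e (Submodule.orthogonalProjectionOnto Kᗮ w) : H) = T ((Submodule.orthogonalProjectionOnto Kᗮ w : H)) := by
            rw [he, ContinuousLinearEquiv.coeFn_ofBijective]
            exact hT₂apply _
          rw [this]
          calc T ((Submodule.orthogonalProjectionOnto Kᗮ w : H))
              = T ((Submodule.orthogonalProjectionOnto K w : H)) + T ((Submodule.orthogonalProjectionOnto Kᗮ w : H)) := by
                rw [hTk, zero_add]
            _ = T w := by rw [← map_add, hdec]
            _ = (T : H →ₗ[ℂ] H) w := rfl
      · rintro ⟨z, ⟨x, hx, rfl⟩, rfl⟩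
        have hxS : (x : H) ∈ S := Set.mem_preimage.mp hx
        rcases Submodule.mem_sup.mp hxS with ⟨w, hw, k, hk, hsum⟩
        refine ⟨w, hw, ?_⟩
        have hex : (e x : H) = T (x : H) := by
          rw [he, ContinuousLinearEquiv.coeFn_ofBijective]
          exact hT₂apply _
        rw [hex, ← hsum]
        have hTk : T k = 0 := hk
        show (T : H →ₗ[ℂ] H) w = T (w + k)
        rw [map_add]
        show T w = T w + T k
        rw [hTk, add_zero]
    have hRanClosed : IsClosed (Ran : Set H) := by
      rw [hRanSet]
      refine (hRclosed.isClosedEmbedding_subtypeVal).isClosedMap _ ?_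
      refine (e.toHomeomorph.isClosedMap) _ ?_
      exact hSclosed.preimage continuous_subtype_val
    set M : Submodule ℂ H := Ran ⊔ Wᗮ with hM
    have hMclosed : IsClosed (M : Set H) :=
      isClosed_sup_of_finiteDimensional H Ran Wᗮ hRanClosed
    -- characterize the range of A
    have hchar : ∀ x : ↥W, x ∈ LinearMap.range (A : ↥W →ₗ[ℂ] ↥W) ↔ (x : H) ∈ M := by
      intro x
      constructor
      · rintro ⟨w, rfl⟩
        have h1 : T (w : H) ∈ Ran := ⟨(w : H), w.2, rfl⟩
        have h2 : T (w : H) - ((Submodule.orthogonalProjectionOnto W (T (w : H)) : H)) ∈ Wᗮ :=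
          Submodule.sub_starProjection_mem_orthogonal (T (w : H))
        have h3 : ((A w : H)) =
            T (w : H) - (T (w : H) - ((Submodule.orthogonalProjectionOnto W (T (w : H)) : H))) := by
          simp [hA, ContinuousLinearMap.comp_apply]
        show ((A w : H)) ∈ M
        rw [h3]
        exact Submodule.sub_mem _ (Submodule.mem_sup_left h1) (Submodule.mem_sup_right h2)
      · intro hx
        rcases Submodule.mem_sup.mp hx with ⟨y, hy, z, hz, hsum⟩
        rcases hy with ⟨w, hw, rfl⟩
        refine ⟨⟨w, hw⟩, ?_⟩
        apply Subtype.ext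
        have h1 : ((A ⟨w, hw⟩ : H)) = ((Submodule.orthogonalProjectionOnto W (T w) : H)) := by
          simp [hA, ContinuousLinearMap.comp_apply]
        have hTw : T w = (x : H) - z := by
          have : (T : H →ₗ[ℂ] H) w = T w := rfl
          rw [this] at hsum
          exact eq_sub_of_add_eq hsum
        have hPz : Submodule.orthogonalProjectionOnto W z = 0 := Submodule.orthogonalProjectionOnto_eq_zero_iff.mpr hz
        have hPx : ((Submodule.orthogonalProjectionOnto W (x : H) : H)) = (x : H) :=
          Submodule.starProjection_eq_self_iff.mpr x.2
        show ((A ⟨w, hw⟩ : H)) = x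
        rw [h1, hTw, map_sub, hPz, sub_zero, hPx]
    -- range of A is closed
    have hAclosed : IsClosed ((LinearMap.range (A : ↥W →ₗ[ℂ] ↥W) : Submodule ℂ ↥W) : Set ↥W) := by
      have : ((LinearMap.range (A : ↥W →ₗ[ℂ] ↥W) : Submodule ℂ ↥W) : Set ↥W) =
          Subtype.val ⁻¹' (M : Set H) := by
        ext x; exact hchar x
      rw [this]
      exact hMclosed.preimage continuous_subtype_val
    haveI : CompleteSpace ↥W := hWc.completeSpace_coe
    haveI : CompleteSpace ↥(LinearMap.range (A : ↥W →ₗ[ℂ] ↥W)) := hAclosed.completeSpace_coe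
    -- range of A is dense
    have hAdense : (LinearMap.range (A : ↥W →ₗ[ℂ] ↥W))ᗮ = ⊥ := by
      rw [Submodule.eq_bot_iff]
      intro x hx
      have h1 : ⟪A x, x⟫_ℂ = 0 := by
        have := (Submodule.mem_orthogonal _ x).mp hx (A x) ⟨x, rfl⟩
        exact this
      rw [hAinner] at h1
      exact key x h1
    have hArange : LinearMap.range (A : ↥W →ₗ[ℂ] ↥W) = ⊤ := Submodule.orthogonal_eq_bot_iff.mp hAdense
    have hAker : LinearMap.ker (A : ↥W →ₗ[ℂ] ↥W) = ⊥ := by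
      rw [LinearMap.ker_eq_bot']
      intro w hw
      apply key
      rw [← hAinner w w, (show A w = 0 from hw), inner_zero_left]
    set eA : ↥W ≃L[ℂ] ↥W := ContinuousLinearEquiv.ofBijective A hAker hArange with heA
    refine ⟨⟨A, eA.symm.toContinuousLinearMap, ?_, ?_⟩, rfl⟩
    · ext x
      have h1 : eA (eA.symm x) = x := eA.apply_symm_apply x
      have h2 : eA (eA.symm x) = A (eA.symm x) := by
        rw [heA, ContinuousLinearEquiv.coeFn_ofBijective]
      simpa [ContinuousLinearMap.mul_apply, ← h2] using h1
    · ext x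
      have h1 : eA.symm (eA x) = x := eA.symm_apply_apply x
      have h2 : eA x = A x := by
        rw [heA, ContinuousLinearEquiv.coeFn_ofBijective]
      simp only [ContinuousLinearMap.mul_apply, ContinuousLinearMap.one_apply,
        ContinuousLinearEquiv.coe_coe, ← h2, h1]
  · intro w hw
    exact key w (hw w)
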